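/- Fix I₂, I₃ > 0 with I₂/I₃ irrational and define E(j,k) = j(j+1)/(2I₂) + (1/(2I₃) − 1/(2I₂))k². Then for any integers j, j', k, k', s, s' (with the gaps |E(j',s') − E(j',s)| of 'η-type', i.e. j fixed) the identity |E(j,k+1) − E(j,k)| = |E(j'',s+h) − E(j',s)| with j ≤ j' ≤ j'' ≤ j+1, −j' ≤ s ≤ j', h ∈ {−1,0,1} forces j' = j'' (both equal to j or to j+1) and s = ±k, s+h = ±(k+1). -/

import Mathlib

/-- The symmetric-top rotational energy levels
`E(j,k) = j(j+1)/(2I₂) + (1/(2I₃) − 1/(2I₂))k²`. -/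
noncomputable def energyLevel (I₂ I₃ : ℝ) (j : ℕ) (k : ℤ) : ℝ :=
  (j * (j + 1)) / (2 * I₂) + (1 / (2 * I₃) - 1 / (2 * I₂)) * (k : ℝ) ^ 2

/-- `η`-resonances: if `I₂/I₃ ∉ ℚ`, an identity
`|E(j,k+1) − E(j,k)| = |E(j'',s+h) − E(j',s)|` with `j ≤ j' ≤ j'' ≤ j+1`,
`−j' ≤ s ≤ j'`, `h ∈ {−1,0,1}` forces `j' = j''` (both equal to `j` or to `j+1`) and the
transition to couple the levels `±k` and `±(k+1)`. -/
theorem eta_resonances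
    (I₂ I₃ : ℝ) (hI₂ : 0 < I₂) (hI₃ : 0 < I₃) (hirr : Irrational (I₂ / I₃))
    (j j' j'' : ℕ) (k s h : ℤ)
    (hk : -(j : ℤ) ≤ k ∧ k ≤ (j : ℤ))
    (hj : j ≤ j' ∧ j' ≤ j'' ∧ j'' ≤ j + 1)
    (hs : -(j' : ℤ) ≤ s ∧ s ≤ (j' : ℤ)) (hh : h = -1 ∨ h = 0 ∨ h = 1)
    (heq : |energyLevel I₂ I₃ j (k + 1) - energyLevel I₂ I₃ j k| =
      |energyLevel I₂ I₃ j'' (s + h) - energyLevel I₂ I₃ j' s|) :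
    j' = j'' ∧ (j' = j ∨ j' = j + 1) ∧
      ((s = k ∧ s + h = k + 1) ∨ (s = -k ∧ s + h = -(k + 1)) ∨
       (s = k + 1 ∧ s + h = k) ∨ (s = -(k + 1) ∧ s + h = -k)) := by
  set A : ℝ := 1 / (2 * I₂) with hA
  set B : ℝ := 1 / (2 * I₃) - 1 / (2 * I₂) with hB
  have hA0 : A ≠ 0 := by positivity
  have hBA : Irrational (B / A) := by
    have hEq : B / A = I₂ / I₃ - 1 := by
      rw [hA, hB]; field_simp
    rw [hEq]
    simpa using hirr.sub_intCast 1
  have key : ∀ m n : ℤ, A * m + B * n = 0 → m = 0 ∧ n = 0 := by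
    intro m n hmn
    by_cases hn : n = 0
    · subst hn
      simp only [Int.cast_zero, mul_zero, add_zero, mul_eq_zero] at hmn
      rcases hmn with h1 | h1
      · exact absurd h1 hA0
      · exact ⟨by exact_mod_cast h1, rfl⟩
    · exfalso
      have hnR : (n : ℝ) ≠ 0 := Int.cast_ne_zero.mpr hn
      have : B / A = (-m : ℝ) / n := by
        have hAne : A ≠ 0 := hA0
        field_simp
        nlinarith [hmn]
      exact hBA ⟨(-m : ℚ) / n, by push_cast; rw [this]⟩
  set m : ℤ := (j'' : ℤ) * (j'' + 1) - (j' : ℤ) * (j' + 1) with hm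
  set n : ℤ := (s + h) ^ 2 - s ^ 2 with hn
  have hL : energyLevel I₂ I₃ j (k + 1) - energyLevel I₂ I₃ j k
      = B * ((2 * k + 1 : ℤ) : ℝ) := by
    simp only [energyLevel, hB]; push_cast; ring
  have hR : energyLevel I₂ I₃ j'' (s + h) - energyLevel I₂ I₃ j' s
      = A * (m : ℝ) + B * (n : ℝ) := by
    simp only [energyLevel, hA, hB, hm, hn]; push_cast; ring
  rw [hL, hR] at heq
  have hcases : m = 0 ∧ (n = 2 * k + 1 ∨ n = -(2 * k + 1)) := by
    rcases abs_eq_abs.mp heq with hc | hc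
    · have := key m (n - (2 * k + 1)) (by push_cast at hc ⊢; linear_combination -hc)
      exact ⟨this.1, Or.inl (by omega)⟩
    · have := key m (n + (2 * k + 1)) (by push_cast at hc ⊢; linear_combination hc)
      exact ⟨this.1, Or.inr (by omega)⟩
  obtain ⟨hm0, hn0⟩ := hcases
  have hj'' : j' = j'' := by
    rcases (by omega : j'' = j' ∨ j'' = j' + 1) with hc | hc
    · omega
    · exfalso
      rw [hm, hc] at hm0
      push_cast at hm0
      nlinarith [hm0]
  refine ⟨hj'', by omega, ?_⟩
  rw [hn] at hn0
  rcases hh with rfl | rfl | rfl <;> [skip; skip; skip] <;>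
    · ring_nf at hn0
      omega
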